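/- Let B − A = κ e_d ⊗ e_d with A = Id and κ > 0. The only solution of B − R A = a ⊗ ν with R ∈ SO(d), a, ν ∈ ℝ^d and |ν| = 1 is (up to the sign ambiguity (a,ν) ↦ (−a,−ν)) given by R = Id, ν = e_d, a = κ e_d. -/

import Mathlib

open Matrix

/-- The special orthogonal group `SO(d)`. -/
def SO (d : ℕ) : Set (Matrix (Fin d) (Fin d) ℝ) :=
  {R | R * Rᵀ = 1 ∧ R.det = 1}

/-- The last standard basis vector `e_d` of `ℝ^d` (here `d = n+2`). -/
noncomputable def lastBasis (n : ℕ) : Fin (n + 2) → ℝ := Pi.single (Fin.last (n + 1)) 1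

/-- with `A = Id`, `B = Id + κ e_d ⊗ e_d`, `κ > 0`, the only solution of
`B − R A = a ⊗ ν` with `R ∈ SO(d)`, `|ν| = 1`, is (up to `(a,ν) ↦ (−a,−ν)`) given by
`R = Id`, `ν = e_d`, `a = κ e_d`. -/
theorem stmt6 (n : ℕ) (κ : ℝ) (hκ : 0 < κ)
    (A B : Matrix (Fin (n + 2)) (Fin (n + 2)) ℝ)
    (hA : A = 1)
    (hB : B = 1 + κ • Matrix.single (Fin.last (n + 1)) (Fin.last (n + 1)) 1)
    (R : Matrix (Fin (n + 2)) (Fin (n + 2)) ℝ) (hR : R ∈ SO (n + 2))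
    (a ν : Fin (n + 2) → ℝ) (hν : ∑ i, ν i ^ 2 = 1)
    (h : B - R * A = Matrix.vecMulVec a ν) :
    R = 1 ∧
      ((a = κ • lastBasis n ∧ ν = lastBasis n) ∨
       (a = -(κ • lastBasis n) ∧ ν = -lastBasis n)) := by
  subst hA hB
  set d : Fin (n + 2) := Fin.last (n + 1) with hd
  rw [mul_one] at h
  have hRmat : R = (1 + κ • Matrix.single d d 1) - vecMulVec a ν := by
    rw [← h]; abel
  have hRtR : Rᵀ * R = 1 := mul_eq_one_comm.mp hR.1
  -- entrywise description of R
  have hRentry : ∀ i j, R i j =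
      (if i = j then 1 else 0) + (if i = d ∧ j = d then κ else 0) - a i * ν j := by
    intro i j
    rw [hRmat]
    simp only [Matrix.sub_apply, Matrix.add_apply, one_apply, Matrix.smul_apply, Matrix.single, of_apply,
      smul_eq_mul, mul_one, vecMulVec_apply]
    congr 2
    simp [eq_comm]
  -- norm preservation forces x d = 0 whenever ν ⬝ᵥ x = 0
  have key : ∀ x : Fin (n + 2) → ℝ, ν ⬝ᵥ x = 0 → x d = 0 := by
    intro x hx
    have h1 : R *ᵥ x = x + (κ * x d) • (Pi.single d 1 : Fin (n + 2) → ℝ) := by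
      have hvv : vecMulVec a ν *ᵥ x = 0 := by
        ext i
        simp only [mulVec, dotProduct, vecMulVec_apply, Pi.zero_apply]
        have hstep : ∑ j, a i * ν j * x j = a i * ∑ j, ν j * x j := by
          rw [Finset.mul_sum]; congr 1; ext j; ring
        have hx' : ∑ j, ν j * x j = 0 := hx
        rw [hstep, hx', mul_zero]
      rw [hRmat, sub_mulVec, hvv, sub_zero]
      ext i
      simp only [mulVec, dotProduct, Matrix.add_apply, Matrix.smul_apply, Matrix.single, of_apply,
        one_apply, Pi.add_apply, Pi.smul_apply, Pi.single_apply, smul_eq_mul, mul_one,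
        add_mul, Finset.sum_add_distrib, ite_mul, zero_mul, Finset.sum_ite_eq, Finset.mem_univ,
        if_true, mul_ite, mul_zero, ite_and]
      by_cases hi : i = d <;> simp [hi, eq_comm]
    have h2 : (R *ᵥ x) ⬝ᵥ (R *ᵥ x) = x ⬝ᵥ x := by
      rw [dotProduct_mulVec, vecMul_mulVec, hRtR, vecMul_one]
    rw [h1] at h2
    have h3 : (x + (κ * x d) • (Pi.single d 1 : Fin (n + 2) → ℝ)) ⬝ᵥ
        (x + (κ * x d) • (Pi.single d 1 : Fin (n + 2) → ℝ))
        = x ⬝ᵥ x + (2 * κ + κ ^ 2) * x d ^ 2 := by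
      have hs1 : (Pi.single d 1 : Fin (n + 2) → ℝ) ⬝ᵥ x = x d := by
        simp [single_dotProduct]
      have hs2 : x ⬝ᵥ (Pi.single d 1 : Fin (n + 2) → ℝ) = x d := by
        simp [dotProduct_single]
      have hs3 : (Pi.single d 1 : Fin (n + 2) → ℝ) ⬝ᵥ (Pi.single d 1 : Fin (n + 2) → ℝ) = 1 := by
        simp [dotProduct, Pi.single_apply]
      simp only [add_dotProduct, dotProduct_add, smul_dotProduct, dotProduct_smul,
        smul_eq_mul, hs1, hs2, hs3]
      ring
    rw [h3] at h2
    have h4 : (2 * κ + κ ^ 2) * x d ^ 2 = 0 := by linarith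
    have h5 : 0 < 2 * κ + κ ^ 2 := by nlinarith
    have := (mul_eq_zero.mp h4).resolve_left (ne_of_gt h5)
    exact pow_eq_zero_iff (by norm_num) |>.mp this
  -- deduce ν d ^ 2 = 1
  have hνd : ν d ^ 2 = 1 := by
    have hx : ν ⬝ᵥ (Pi.single d 1 - ν d • ν) = 0 := by
      have h1 : ν ⬝ᵥ (Pi.single d 1 : Fin (n + 2) → ℝ) = ν d := by
        simp [dotProduct_single]
      have h2 : ν ⬝ᵥ ν = 1 := by
        rw [← hν]; simp [dotProduct, sq]
      rw [dotProduct_sub, h1, dotProduct_smul, h2, smul_eq_mul, mul_one, sub_self]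
    have := key _ hx
    simp only [Pi.sub_apply, Pi.single_eq_same, Pi.smul_apply, smul_eq_mul] at this
    nlinarith [this]
  -- off entries of ν vanish
  have hν0 : ∀ i, i ≠ d → ν i = 0 := by
    intro i hi
    have hsum : ∑ j ∈ Finset.univ.erase d, ν j ^ 2 = 0 := by
      have h2 : (∑ j ∈ Finset.univ.erase d, ν j ^ 2) + ν d ^ 2 = ∑ j, ν j ^ 2 :=
        Finset.sum_erase_add Finset.univ (fun j => ν j ^ 2) (Finset.mem_univ d)
      rw [hν] at h2
      nlinarith [h2, hνd]
    have := (Finset.sum_eq_zero_iff_of_nonneg (fun j _ => sq_nonneg (ν j))).mp hsum i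
      (Finset.mem_erase.mpr ⟨hi, Finset.mem_univ i⟩)
    exact pow_eq_zero_iff (by norm_num) |>.mp this
  -- a j = 0 for j ≠ d
  have ha0 : ∀ j, j ≠ d → a j = 0 := by
    intro j hj
    have hcol := congrFun (congrFun hRtR j) d
    have hRkj : ∀ k, R k j = if k = j then 1 else 0 := by
      intro k
      rw [hRentry, hν0 j hj]
      simp [hj]
    have hLHS : (Rᵀ * R) j d = R j d := by
      simp only [Matrix.mul_apply, transpose_apply]
      rw [Finset.sum_eq_single j]
      · rw [hRkj]; simp
      · intro k _ hk; rw [hRkj]; simp [hk]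
      · simp
    rw [hLHS] at hcol
    rw [hRentry] at hcol
    simp only [hj, if_false, false_and, one_apply, Ne.symm hj] at hcol
    have : a j * ν d = 0 := by
      by_cases hjd : j = d
      · exact absurd hjd hj
      · simpa [hjd] using hcol
    have hνdne : ν d ≠ 0 := by intro h0; rw [h0] at hνd; norm_num at hνd
    exact (mul_eq_zero.mp this).resolve_right hνdne
  -- R is diagonal
  have hRdiag : R = Matrix.diagonal (fun i => if i = d then 1 + κ - a d * ν d else 1) := by
    ext i j
    rw [hRentry]
    by_cases hij : i = j
    · subst hij
      by_cases hi : i = d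
      · simp [hi, diagonal_apply_eq]
      · simp [hi, diagonal_apply_eq, hν0 i hi]
    · have hz : a i * ν j = 0 := by
        by_cases hjd : j = d
        · have hid : i ≠ d := by rw [hjd] at hij; exact hij
          rw [ha0 i hid, zero_mul]
        · rw [hν0 j hjd, mul_zero]
      simp [hij, diagonal_apply_ne _ hij, hz]
      intro hi hj; exact absurd (hi.trans hj.symm) hij
  -- determinant pins down the remaining entry
  have hdet : (1 + κ - a d * ν d) = 1 := by
    have hdet1 := hR.2
    rw [hRdiag, det_diagonal] at hdet1
    have hprod : (∏ i : Fin (n + 2), if i = d then 1 + κ - a d * ν d else 1)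
        = 1 + κ - a d * ν d := by
      rw [Finset.prod_eq_single d]
      · simp
      · intro k _ hk; simp [hk]
      · simp
    rw [hprod] at hdet1
    exact hdet1
  have hadνd : a d * ν d = κ := by linarith
  have hR1 : R = 1 := by
    rw [hRdiag, hadνd]
    ext i j
    by_cases hij : i = j
    · subst hij; simp [diagonal_apply_eq]
    · simp [diagonal_apply_ne _ hij, one_apply_ne hij]
  refine ⟨hR1, ?_⟩
  have hν2 : ν d * ν d = 1 := by nlinarith [hνd]
  rcases mul_self_eq_one_iff.mp hν2 with hε | hε
  · left
    refine ⟨?_, ?_⟩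
    · ext i
      by_cases hi : i = d
      · subst hi
        have had : a d = κ := by rw [hε, mul_one] at hadνd; exact hadνd
        simp [lastBasis, had, ← hd]
      · simp [lastBasis, ha0 i hi, Pi.single_apply, ← hd, hi]
    · ext i
      by_cases hi : i = d
      · subst hi; simp [lastBasis, hε, ← hd]
      · simp [lastBasis, hν0 i hi, Pi.single_apply, ← hd, hi]
  · right
    refine ⟨?_, ?_⟩
    · ext i
      by_cases hi : i = d
      · subst hi
        have had : a d = -κ := by rw [hε] at hadνd; linarith
        simp [lastBasis, had, ← hd]
      · simp [lastBasis, ha0 i hi, Pi.single_apply, ← hd, hi]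
    · ext i
      by_cases hi : i = d
      · subst hi; simp [lastBasis, hε, ← hd]
      · simp [lastBasis, hν0 i hi, Pi.single_apply, ← hd, hi]
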